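/- Suppose 0 < ε < 1/2, and set α = (1−2ε)/(1−ε) ∈ (0,1), C₄ = 2/(1−α), C₅ = (1+α)/2, n₀ = ⌈log_α((1−C₅)/(2C₄))⌉, γ = (3+α)/4, and η = C₄/(1−α) + C₅·n₀. Let c̄(b,i) = Σ_m μ(m,i)·b(m). For β ∈ (0,1), define the finite-horizon discounted value functions by the recursion V_{1,β}(b) = max_{i} c̄(b,i) and V_{j+1,β}(b) = max_{i} [ c̄(b,i) + β·Σ_{r∈{0,1}} p(r|b,i)·V_{j,β}(H(b,i,r)) ] for j ≥ 1 and b ∈ B, where the maximum is over i ∈ {1,…,I}. Then for every integer k ≥ 1, every β ∈ (0,1), and all b¹, b² ∈ B, | V_{k·n₀, β}(b¹) − V_{k·n₀, β}(b²) | ≤ [ η·(1 − (β^{n₀}γ)^k)/(1 − β^{n₀}γ) + (β^{n₀}γ)^k ]·‖b¹ − b²‖₁. -/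

import Mathlib

open Finset

/-- Membership in the belief simplex `B`. -/
def IsBelief {M : ℕ} (b : Fin M → ℝ) : Prop :=
  (∀ m, 0 ≤ b m) ∧ ∑ m, b m = 1

/-- ℓ¹ distance between two vectors. -/
noncomputable def l1 {M : ℕ} (b b' : Fin M → ℝ) : ℝ :=
  ∑ m, |b m - b' m|

/-- A row-stochastic matrix. -/
def RowStochastic {M : ℕ} (P : Fin M → Fin M → ℝ) : Prop :=
  (∀ m m', 0 ≤ P m m') ∧ ∀ m, ∑ m', P m m' = 1

/-- Bernoulli likelihood `p^r (1-p)^(1-r)` for `r ∈ {0,1}` (encoded as `Bool`). -/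
noncomputable def bern (p : ℝ) (r : Bool) : ℝ :=
  if r then p else 1 - p

/-- Bayesian belief update `H(b, i, r)`. -/
noncomputable def Hupd {M I : ℕ} (P : Fin M → Fin M → ℝ) (μ : Fin M → Fin I → ℝ)
    (b : Fin M → ℝ) (i : Fin I) (r : Bool) : Fin M → ℝ :=
  fun m => (∑ m', P m' m * (bern (μ m' i) r * b m')) /
    (∑ m'', bern (μ m'' i) r * b m'')

/-- Probability `p(r | b, i)` of observing reward `r` under belief `b` pulling arm `i`. -/
noncomputable def pObs {M I : ℕ} (μ : Fin M → Fin I → ℝ)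
    (b : Fin M → ℝ) (i : Fin I) (r : Bool) : ℝ :=
  ∑ m, bern (μ m i) r * b m

/-- `n`-step iterated Bayesian belief update `H^(n)(b, i_{1:n}, r_{1:n})`. -/
noncomputable def Hiter {M I : ℕ} (P : Fin M → Fin M → ℝ) (μ : Fin M → Fin I → ℝ) :
    (n : ℕ) → (Fin M → ℝ) → (Fin n → Fin I) → (Fin n → Bool) → (Fin M → ℝ)
  | 0, b, _, _ => b
  | n + 1, b, is, rs =>
      Hiter P μ n (Hupd P μ b (is 0) (rs 0)) (fun t => is t.succ) (fun t => rs t.succ)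

/-- Law `L(r_{1:n+1} | m, i_{1:n+1})` of a reward sequence of length `n+1`
given the initial hidden state `m`. -/
noncomputable def law {M I : ℕ} (P : Fin M → Fin M → ℝ) (μ : Fin M → Fin I → ℝ) :
    (n : ℕ) → Fin M → (Fin (n + 1) → Fin I) → (Fin (n + 1) → Bool) → ℝ
  | 0, m, is, rs => bern (μ m (is 0)) (rs 0)
  | n + 1, m, is, rs =>
      bern (μ m (is 0)) (rs 0) *
        ∑ m', P m m' * law P μ n m' (fun t => is t.succ) (fun t => rs t.succ)

/-- Law `Q^(n+1)(r_{1:n+1} | b, i_{1:n+1})` of a reward sequence of length `n+1`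
given the initial belief `b`. -/
noncomputable def Qlaw {M I : ℕ} (P : Fin M → Fin M → ℝ) (μ : Fin M → Fin I → ℝ)
    (n : ℕ) (b : Fin M → ℝ) (is : Fin (n + 1) → Fin I) (rs : Fin (n + 1) → Bool) : ℝ :=
  ∑ m, b m * law P μ n m is rs

/-- Finite-horizon discounted optimal value functions of the belief MDP:
`Vfin P μ β j` is `V_{j,β}`, with `V_{0,β} = 0`, so that
`V_{1,β}(b) = max_i c̄(b,i)` and
`V_{j+1,β}(b) = max_i [c̄(b,i) + β Σ_r p(r|b,i) V_{j,β}(H(b,i,r))]`. -/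
noncomputable def Vfin {M I : ℕ} (P : Fin M → Fin M → ℝ) (μ : Fin M → Fin I → ℝ)
    (β : ℝ) : ℕ → (Fin M → ℝ) → ℝ
  | 0, _ => 0
  | j + 1, b =>
      ⨆ i : Fin I, ((∑ m, μ m i * b m) +
        β * ∑ r : Bool, pObs μ b i r * Vfin P μ β j (Hupd P μ b i r))

/-! ### Auxiliary definitions -/

theorem sum_pi_succ {n : ℕ} (g : (Fin (n+1) → Bool) → ℝ) :
    ∑ rs, g rs = ∑ r, ∑ rs : Fin n → Bool, g (Fin.cons r rs) := by
  rw [show (∑ r, ∑ rs : Fin n → Bool, g (Fin.cons r rs))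
      = ∑ p : Bool × (Fin n → Bool), g (Fin.cons p.1 p.2) from
    (Fintype.sum_prod_type (f := fun p : Bool × (Fin n → Bool) => g (Fin.cons p.1 p.2))).symm]
  exact Fintype.sum_equiv (Fin.consEquiv (fun _ : Fin (n+1) => Bool)).symm _ _
    (by intro rs; simp [Fin.consEquiv])

noncomputable def bayes {M : ℕ} (b g : Fin M → ℝ) : Fin M → ℝ :=
  fun m => b m * g m / ∑ m', b m' * g m'

def shiftT {I : ℕ} (σ : List Bool → Fin I) (r : Bool) : List Bool → Fin I :=
  fun l => σ (r :: l)

noncomputable def treeH {M I : ℕ} (P : Fin M → Fin M → ℝ) (μ : Fin M → Fin I → ℝ) :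
    (n : ℕ) → (List Bool → Fin I) → (Fin M → ℝ) → (Fin n → Bool) → (Fin M → ℝ)
  | 0, _, b, _ => b
  | n+1, σ, b, rs =>
      treeH P μ n (shiftT σ (rs 0)) (Hupd P μ b (σ []) (rs 0)) (Fin.tail rs)

noncomputable def treeLaw {M I : ℕ} (P : Fin M → Fin M → ℝ) (μ : Fin M → Fin I → ℝ) :
    (n : ℕ) → (List Bool → Fin I) → Fin M → (Fin n → Bool) → ℝ
  | 0, _, _, _ => 1
  | n+1, σ, m, rs => bern (μ m (σ [])) (rs 0) *
      ∑ m', P m m' * treeLaw P μ n (shiftT σ (rs 0)) m' (Fin.tail rs)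

noncomputable def treeQ {M I : ℕ} (P : Fin M → Fin M → ℝ) (μ : Fin M → Fin I → ℝ)
    (n : ℕ) (σ : List Bool → Fin I) (b : Fin M → ℝ) (rs : Fin n → Bool) : ℝ :=
  ∑ m, b m * treeLaw P μ n σ m rs

noncomputable def Jval {M I : ℕ} (P : Fin M → Fin M → ℝ) (μ : Fin M → Fin I → ℝ)
    (β : ℝ) (j : ℕ) : (n : ℕ) → (List Bool → Fin I) → (Fin M → ℝ) → ℝ
  | 0, _, b => Vfin P μ β j b
  | n+1, σ, b => (∑ m, μ m (σ []) * b m) +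
      β * ∑ r : Bool, pObs μ b (σ []) r *
        Jval P μ β j n (shiftT σ r) (Hupd P μ b (σ []) r)

section Basic
variable {M I : ℕ} {P : Fin M → Fin M → ℝ} {μ : Fin M → Fin I → ℝ} {ε : ℝ}

theorem bern_pos {p : ℝ} (hp : p ∈ Set.Ioo (0:ℝ) 1) (r : Bool) : 0 < bern p r := by
  cases r <;> simp [bern] <;> linarith [hp.1, hp.2]

theorem bern_le_one {p : ℝ} (hp : p ∈ Set.Ioo (0:ℝ) 1) (r : Bool) : bern p r ≤ 1 := by
  cases r <;> simp [bern] <;> linarith [hp.1, hp.2]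

theorem bern_sum (p : ℝ) : ∑ r : Bool, bern p r = 1 := by
  simp [bern]

theorem exists_pos_of_belief {b : Fin M → ℝ} (hb : IsBelief b) : ∃ m, 0 < b m := by
  by_contra h
  push_neg at h
  have : ∑ m, b m ≤ 0 := Finset.sum_nonpos (fun m _ => h m)
  rw [hb.2] at this; linarith

theorem pObs_pos (hμ : ∀ m i, μ m i ∈ Set.Ioo (0:ℝ) 1) {b : Fin M → ℝ} (hb : IsBelief b)
    (i : Fin I) (r : Bool) : 0 < pObs μ b i r := by
  obtain ⟨m₀, hm₀⟩ := exists_pos_of_belief hb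
  have : (0:ℝ) < bern (μ m₀ i) r * b m₀ := mul_pos (bern_pos (hμ m₀ i) r) hm₀
  refine lt_of_lt_of_le this ?_
  exact Finset.single_le_sum (f := fun m => bern (μ m i) r * b m)
    (fun m _ => mul_nonneg (bern_pos (hμ m i) r).le (hb.1 m)) (mem_univ m₀)

theorem pObs_sum (hμ : ∀ m i, μ m i ∈ Set.Ioo (0:ℝ) 1) {b : Fin M → ℝ} (hb : IsBelief b)
    (i : Fin I) : ∑ r : Bool, pObs μ b i r = 1 := by
  simp only [pObs]
  rw [Finset.sum_comm (s := univ) (t := univ) (f := fun r m => bern (μ m i) r * b m)]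
  rw [show (∑ m, ∑ r : Bool, bern (μ m i) r * b m) = ∑ m, b m from ?_, hb.2]
  refine Finset.sum_congr rfl fun m _ => ?_
  rw [← Finset.sum_mul, bern_sum, one_mul]

theorem Hupd_isBelief (hP : RowStochastic P) (hμ : ∀ m i, μ m i ∈ Set.Ioo (0:ℝ) 1)
    {b : Fin M → ℝ} (hb : IsBelief b) (i : Fin I) (r : Bool) :
    IsBelief (Hupd P μ b i r) := by
  have hp : 0 < pObs μ b i r := pObs_pos hμ hb i r
  constructor
  · intro m
    apply div_nonneg _ hp.le
    exact Finset.sum_nonneg fun m' _ => mul_nonneg (hP.1 m' m)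
      (mul_nonneg (bern_pos (hμ m' i) r).le (hb.1 m'))
  · simp only [Hupd]
    rw [← Finset.sum_div]
    rw [Finset.sum_comm (s := univ) (t := univ)
      (f := fun m m' => P m' m * (bern (μ m' i) r * b m'))]
    have : ∀ m', ∑ m, P m' m * (bern (μ m' i) r * b m') = bern (μ m' i) r * b m' := by
      intro m'
      rw [← Finset.sum_mul, hP.2 m', one_mul]
    rw [Finset.sum_congr rfl (fun m' _ => this m')]
    exact div_self hp.ne'

theorem Hupd_entry_ge (hP : RowStochastic P) (hPl : ∀ m m', ε ≤ P m m')
    (hμ : ∀ m i, μ m i ∈ Set.Ioo (0:ℝ) 1) (hε0 : 0 < ε)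
    {b : Fin M → ℝ} (hb : IsBelief b) (i : Fin I) (r : Bool) (m : Fin M) :
    ε ≤ Hupd P μ b i r m := by
  have hp : 0 < pObs μ b i r := pObs_pos hμ hb i r
  rw [Hupd, show (∑ m'', bern (μ m'' i) r * b m'') = pObs μ b i r from rfl]
  rw [le_div_iff₀ hp]
  calc ε * pObs μ b i r = ∑ m', ε * (bern (μ m' i) r * b m') := by
        rw [pObs, Finset.mul_sum]
    _ ≤ ∑ m', P m' m * (bern (μ m' i) r * b m') := by
        refine Finset.sum_le_sum fun m' _ => ?_
        exact mul_le_mul_of_nonneg_right (hPl m' m)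
          (mul_nonneg (bern_pos (hμ m' i) r).le (hb.1 m'))

theorem treeLaw_pos (hPl : ∀ m m', ε ≤ P m m') (hε0 : 0 < ε) (hM : 0 < M)
    (hμ : ∀ m i, μ m i ∈ Set.Ioo (0:ℝ) 1) :
    ∀ (n : ℕ) (σ : List Bool → Fin I) (m : Fin M) (rs : Fin n → Bool),
      0 < treeLaw P μ n σ m rs := by
  intro n
  induction n with
  | zero => intro σ m rs; simp [treeLaw]
  | succ n ih =>
      intro σ m rs
      rw [treeLaw]
      refine mul_pos (bern_pos (hμ m (σ [])) (rs 0)) ?_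
      have : Nonempty (Fin M) := ⟨⟨0, hM⟩⟩
      refine Finset.sum_pos (fun m' _ => mul_pos (lt_of_lt_of_le hε0 (hPl m m'))
        (ih _ m' _)) univ_nonempty

theorem treeLaw_sum (hP : RowStochastic P) (hμ : ∀ m i, μ m i ∈ Set.Ioo (0:ℝ) 1) :
    ∀ (n : ℕ) (σ : List Bool → Fin I) (m : Fin M),
      ∑ rs : Fin n → Bool, treeLaw P μ n σ m rs = 1 := by
  intro n
  induction n with
  | zero => intro σ m; simp [treeLaw]
  | succ n ih =>
      intro σ m
      rw [sum_pi_succ (g := fun rs => treeLaw P μ (n+1) σ m rs)]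
      have : ∀ r : Bool, ∑ rs : Fin n → Bool, treeLaw P μ (n+1) σ m (Fin.cons r rs)
          = bern (μ m (σ [])) r := by
        intro r
        simp only [treeLaw, Fin.cons_zero, Fin.tail_cons]
        rw [← Finset.mul_sum]
        rw [Finset.sum_comm (s := univ) (t := univ)]
        have : ∀ m', ∑ rs : Fin n → Bool,
            P m m' * treeLaw P μ n (shiftT σ r) m' rs = P m m' := by
          intro m'
          rw [← Finset.mul_sum, ih _ m', mul_one]
        rw [Finset.sum_congr rfl (fun m' _ => this m'), hP.2 m, mul_one]
      rw [Finset.sum_congr rfl (fun r _ => this r), bern_sum]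

end Basic
section Dobrushin

theorem dobrushin {M : ℕ} (K : Fin M → Fin M → ℝ) (ν : Fin M → ℝ) (c : ℝ)
    (hc1 : c ≤ 1) (hν0 : ∀ m, 0 ≤ ν m) (hν1 : ∑ m, ν m = 1)
    (hK : ∀ m m', c * ν m' ≤ K m m') (hKrow : ∀ m, ∑ m', K m m' = 1)
    (d : Fin M → ℝ) (hd : ∑ m, d m = 0) :
    ∑ m', |∑ m, d m * K m m'| ≤ (1 - c) * ∑ m, |d m| := by
  have key : ∀ m', ∑ m, d m * K m m' = ∑ m, d m * (K m m' - c * ν m') := by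
    intro m'
    rw [Finset.sum_congr rfl (fun m _ => mul_sub (d m) (K m m') (c * ν m')),
      Finset.sum_sub_distrib]
    have : ∑ m, d m * (c * ν m') = (∑ m, d m) * (c * ν m') := by
      rw [Finset.sum_mul]
    rw [this, hd, zero_mul, sub_zero]
  calc ∑ m', |∑ m, d m * K m m'|
      ≤ ∑ m', ∑ m, |d m| * (K m m' - c * ν m') := by
        refine Finset.sum_le_sum fun m' _ => ?_
        rw [key m']
        refine (Finset.abs_sum_le_sum_abs _ _).trans ?_
        refine Finset.sum_le_sum fun m _ => ?_
        rw [abs_mul, abs_of_nonneg (sub_nonneg.2 (hK m m'))]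
    _ = ∑ m, |d m| * ∑ m', (K m m' - c * ν m') := by
        rw [Finset.sum_comm]
        exact Finset.sum_congr rfl fun m _ => (Finset.mul_sum _ _ _).symm
    _ = (1 - c) * ∑ m, |d m| := by
        rw [Finset.mul_sum]
        refine Finset.sum_congr rfl fun m _ => ?_
        rw [Finset.sum_sub_distrib, hKrow m, ← Finset.mul_sum, hν1, mul_one, mul_comm]

end Dobrushin

section L1
variable {M : ℕ}

theorem l1_nonneg (b b' : Fin M → ℝ) : 0 ≤ l1 b b' :=
  Finset.sum_nonneg fun m _ => abs_nonneg _

theorem l1_symm (b b' : Fin M → ℝ) : l1 b b' = l1 b' b := by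
  unfold l1
  exact Finset.sum_congr rfl fun m _ => abs_sub_comm _ _

end L1

section BayesLemmas
variable {M I : ℕ} {P : Fin M → Fin M → ℝ} {μ : Fin M → Fin I → ℝ} {ε : ℝ}

theorem bayes_denom_pos {b g : Fin M → ℝ} (hb : IsBelief b) (hg : ∀ m, 0 < g m) :
    0 < ∑ m, b m * g m := by
  obtain ⟨m₀, hm₀⟩ := exists_pos_of_belief hb
  refine lt_of_lt_of_le (mul_pos hm₀ (hg m₀)) ?_
  exact Finset.single_le_sum (f := fun m => b m * g m)
    (fun m _ => mul_nonneg (hb.1 m) (hg m).le) (Finset.mem_univ m₀)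

theorem bayes_one {b : Fin M → ℝ} (hb : IsBelief b) : bayes b (fun _ => 1) = b := by
  funext m
  simp [bayes, hb.2]

theorem bayes_weighted_l1 {b₁ b₂ g : Fin M → ℝ} (hb₁ : IsBelief b₁) (hb₂ : IsBelief b₂)
    (hg : ∀ m, 0 < g m) :
    (∑ m, b₁ m * g m) * l1 (bayes b₁ g) (bayes b₂ g)
      ≤ ∑ m, g m * |b₁ m - b₂ m| + |∑ m, g m * (b₁ m - b₂ m)| := by
  set X := ∑ m, b₁ m * g m with hX
  set Y := ∑ m, b₂ m * g m with hY
  have hXpos : 0 < X := bayes_denom_pos hb₁ hg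
  have hYpos : 0 < Y := bayes_denom_pos hb₂ hg
  have key : ∀ m, X * (bayes b₁ g m - bayes b₂ g m)
      = g m * (b₁ m - b₂ m) - (b₂ m * g m / Y) * (X - Y) := by
    intro m
    simp only [bayes, ← hX, ← hY]
    field_simp
    ring
  have hXY : X - Y = ∑ m, g m * (b₁ m - b₂ m) := by
    rw [hX, hY, ← Finset.sum_sub_distrib]
    exact Finset.sum_congr rfl fun m _ => by ring
  calc X * l1 (bayes b₁ g) (bayes b₂ g)
      = ∑ m, |X * (bayes b₁ g m - bayes b₂ g m)| := by
        rw [l1, Finset.mul_sum]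
        exact Finset.sum_congr rfl fun m _ => by
          rw [abs_mul, abs_of_pos hXpos]
    _ ≤ ∑ m, (g m * |b₁ m - b₂ m| + (b₂ m * g m / Y) * |∑ m', g m' * (b₁ m' - b₂ m')|) := by
        refine Finset.sum_le_sum fun m _ => ?_
        rw [key m, ← hXY]
        refine (abs_sub _ _).trans ?_
        gcongr
        · rw [abs_mul, abs_of_pos (hg m)]
        · rw [abs_mul]
          refine mul_le_mul_of_nonneg_right ?_ (abs_nonneg _)
          rw [abs_of_nonneg (div_nonneg (mul_nonneg (hb₂.1 m) (hg m).le) hYpos.le)]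
    _ = ∑ m, g m * |b₁ m - b₂ m| + |∑ m', g m' * (b₁ m' - b₂ m')| := by
        rw [Finset.sum_add_distrib]
        congr 1
        rw [← Finset.sum_mul]
        have : ∑ m, b₂ m * g m / Y = 1 := by
          rw [← Finset.sum_div, ← hY, div_self hYpos.ne']
        rw [this, one_mul]

end BayesLemmas
section Contraction
variable {M I : ℕ} {P : Fin M → Fin M → ℝ} {μ : Fin M → Fin I → ℝ} {ε α : ℝ}

theorem P_entry_le (hM : 2 ≤ M) (hP : RowStochastic P) (hPl : ∀ m m', ε ≤ P m m')
    (m m' : Fin M) : P m m' ≤ 1 - ε := by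
  have hsplit : P m m' + ∑ m'' ∈ Finset.univ.erase m', P m m'' = 1 := by
    rw [Finset.add_sum_erase _ _ (Finset.mem_univ m')]
    exact hP.2 m
  obtain ⟨m₀, hm₀⟩ : ∃ m₀ : Fin M, m₀ ≠ m' := by
    rcases Decidable.em (m' = ⟨0, by omega⟩) with h | h
    · exact ⟨⟨1, by omega⟩, by rw [h]; simp [Fin.ext_iff]⟩
    · exact ⟨⟨0, by omega⟩, fun hc => h (by rw [← hc])⟩
  have : ε ≤ ∑ m'' ∈ Finset.univ.erase m', P m m'' := by
    refine le_trans (hPl m m₀) ?_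
    exact Finset.single_le_sum (f := fun m'' => P m m'')
      (fun m'' _ => hP.1 m m'')
      (Finset.mem_erase.2 ⟨hm₀, Finset.mem_univ m₀⟩)
  linarith

theorem contraction_step (hM : 2 ≤ M) (hP : RowStochastic P)
    (hPl : ∀ m m', ε ≤ P m m') (hε0 : 0 < ε) (hεh : ε < 1/2)
    (hμ : ∀ m i, μ m i ∈ Set.Ioo (0:ℝ) 1)
    (hα : α = (1 - 2*ε)/(1 - ε))
    {b₁ b₂ : Fin M → ℝ} (hb₁ : IsBelief b₁) (hb₂ : IsBelief b₂) (i : Fin I) (r : Bool)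
    {g' : Fin M → ℝ} (hg' : ∀ m, 0 < g' m) :
    l1 (bayes (Hupd P μ b₁ i r) g') (bayes (Hupd P μ b₂ i r) g')
      ≤ α * l1 (bayes b₁ (fun m => bern (μ m i) r * ∑ m', P m m' * g' m'))
               (bayes b₂ (fun m => bern (μ m i) r * ∑ m', P m m' * g' m')) := by
  have hε1 : (0:ℝ) < 1 - ε := by linarith
  have hMpos : 0 < M := by omega
  have hne : Nonempty (Fin M) := ⟨⟨0, hMpos⟩⟩
  have hca : 1 - α = ε / (1 - ε) := by
    rw [hα]; field_simp; ring
  have hα0 : 0 ≤ α := by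
    rw [hα]
    apply div_nonneg (by linarith) (by linarith)
  have hw : ∀ m, 0 < bern (μ m i) r := fun m => bern_pos (hμ m i) r
  have hApos : ∀ m, 0 < ∑ m', P m m' * g' m' := by
    intro m
    exact Finset.sum_pos (fun m' _ => mul_pos (lt_of_lt_of_le hε0 (hPl m m')) (hg' m'))
      Finset.univ_nonempty
  have hGpos : 0 < ∑ m', g' m' :=
    Finset.sum_pos (fun m' _ => hg' m') Finset.univ_nonempty
  have hAle : ∀ m, (∑ m', P m m' * g' m') ≤ (1 - ε) * ∑ m', g' m' := by
    intro m
    rw [Finset.mul_sum]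
    exact Finset.sum_le_sum fun m' _ =>
      mul_le_mul_of_nonneg_right (P_entry_le hM hP hPl m m') (hg' m').le
  have hgpos : ∀ m, 0 < bern (μ m i) r * ∑ m', P m m' * g' m' :=
    fun m => mul_pos (hw m) (hApos m)
  -- main identity for a single belief
  have main : ∀ b : Fin M → ℝ, IsBelief b →
      (∀ m', bayes (Hupd P μ b i r) g' m'
          = ∑ m, bayes b (fun m => bern (μ m i) r * ∑ m', P m m' * g' m') m
              * (P m m' * g' m' / ∑ m'', P m m'' * g' m'')) ∧
      (∑ m, bayes b (fun m => bern (μ m i) r * ∑ m', P m m' * g' m') m = 1) := by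
    intro b hb
    have hppos : 0 < pObs μ b i r := pObs_pos hμ hb i r
    have hNpos : 0 < ∑ m, b m * (bern (μ m i) r * ∑ m', P m m' * g' m') :=
      bayes_denom_pos hb hgpos
    have hNT : (∑ m, b m * (bern (μ m i) r * ∑ m', P m m' * g' m'))
        = ∑ m', g' m' * ∑ m, P m m' * (bern (μ m i) r * b m) := by
      simp only [Finset.mul_sum]
      rw [Finset.sum_comm]
      exact Finset.sum_congr rfl fun m _ => Finset.sum_congr rfl fun m' _ => by ring
    have hHupd : ∀ m', Hupd P μ b i r m'
        = (∑ m, P m m' * (bern (μ m i) r * b m)) / pObs μ b i r := fun m' => rfl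
    have hDenom : (∑ m', Hupd P μ b i r m' * g' m')
        = (∑ m, b m * (bern (μ m i) r * ∑ m', P m m' * g' m')) / pObs μ b i r := by
      rw [hNT, Finset.sum_div]
      exact Finset.sum_congr rfl fun m' _ => by rw [hHupd m']; ring
    have hbayesH : ∀ m', bayes (Hupd P μ b i r) g' m'
        = g' m' * (∑ m, P m m' * (bern (μ m i) r * b m))
          / ∑ m, b m * (bern (μ m i) r * ∑ m', P m m' * g' m') := by
      intro m'
      rw [bayes, hDenom, hHupd m']
      field_simp
    constructor
    · intro m'
      rw [hbayesH m']
      have : ∀ m, bayes b (fun m => bern (μ m i) r * ∑ m', P m m' * g' m') m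
          * (P m m' * g' m' / ∑ m'', P m m'' * g' m'')
          = (P m m' * (bern (μ m i) r * b m)) * g' m'
            / ∑ m, b m * (bern (μ m i) r * ∑ m', P m m' * g' m') := by
        intro m
        rw [bayes]
        rw [div_mul_div_comm, div_eq_div_iff]
        · ring
        · exact mul_ne_zero hNpos.ne' (hApos m).ne'
        · exact hNpos.ne'
      rw [Finset.sum_congr rfl fun m _ => this m, ← Finset.sum_div, Finset.mul_sum]
      refine congrArg (· / _) ?_
      exact Finset.sum_congr rfl fun m _ => by ring
    · simp only [bayes]
      rw [← Finset.sum_div, div_self hNpos.ne']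
  -- apply Dobrushin
  have h1 := (main b₁ hb₁).1
  have h2 := (main b₂ hb₂).1
  have hsum1 := (main b₁ hb₁).2
  have hsum2 := (main b₂ hb₂).2
  have key := dobrushin (fun m m' => P m m' * g' m' / ∑ m'', P m m'' * g' m'')
    (fun m' => g' m' / ∑ m'', g' m'') (1 - α) (by linarith)
    (fun m' => (div_nonneg (hg' m').le hGpos.le))
    (by rw [← Finset.sum_div, div_self hGpos.ne'])
    (fun m m' => ?_) (fun m => ?_)
    (fun m => bayes b₁ (fun m => bern (μ m i) r * ∑ m', P m m' * g' m') m
      - bayes b₂ (fun m => bern (μ m i) r * ∑ m', P m m' * g' m') m)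
    (by rw [Finset.sum_sub_distrib, hsum1, hsum2, sub_self])
  · calc l1 (bayes (Hupd P μ b₁ i r) g') (bayes (Hupd P μ b₂ i r) g')
        = ∑ m', |∑ m, (bayes b₁ (fun m => bern (μ m i) r * ∑ m', P m m' * g' m') m
            - bayes b₂ (fun m => bern (μ m i) r * ∑ m', P m m' * g' m') m)
            * (P m m' * g' m' / ∑ m'', P m m'' * g' m'')| := by
          refine Finset.sum_congr rfl fun m' _ => ?_
          rw [h1 m', h2 m', ← Finset.sum_sub_distrib]
          refine congrArg abs (Finset.sum_congr rfl fun m _ => ?_)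
          ring
      _ ≤ (1 - (1 - α)) * ∑ m, |bayes b₁ (fun m => bern (μ m i) r * ∑ m', P m m' * g' m') m
            - bayes b₂ (fun m => bern (μ m i) r * ∑ m', P m m' * g' m') m| := key
      _ = α * l1 (bayes b₁ (fun m => bern (μ m i) r * ∑ m', P m m' * g' m'))
               (bayes b₂ (fun m => bern (μ m i) r * ∑ m', P m m' * g' m')) := by
          rw [l1]; ring_nf
  · -- minorization
    rw [hca]
    rw [div_mul_div_comm, div_le_div_iff₀ (mul_pos hε1 hGpos) (hApos m)]
    calc ε * g' m' * ∑ m'', P m m'' * g' m''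
        ≤ ε * g' m' * ((1 - ε) * ∑ m'', g' m'') := by
          exact mul_le_mul_of_nonneg_left (hAle m) (mul_pos hε0 (hg' m')).le
      _ = (ε * g' m') * ((1 - ε) * ∑ m'', g' m'') := by ring
      _ ≤ (P m m' * g' m') * ((1 - ε) * ∑ m'', g' m'') := by
          refine mul_le_mul_of_nonneg_right ?_ (mul_pos hε1 hGpos).le
          exact mul_le_mul_of_nonneg_right (hPl m m') (hg' m').le
      _ = P m m' * g' m' * ((1 - ε) * ∑ m'', g' m'') := by ring
  · -- row sums
    rw [← Finset.sum_div, div_self (hApos m).ne']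

end Contraction
section Filter
variable {M I : ℕ} {P : Fin M → Fin M → ℝ} {μ : Fin M → Fin I → ℝ} {ε α : ℝ}

/-- Pathwise filter stability via the backward-smoothing / Dobrushin argument. -/
theorem treeH_contract (hM : 2 ≤ M) (hP : RowStochastic P)
    (hPl : ∀ m m', ε ≤ P m m') (hε0 : 0 < ε) (hεh : ε < 1/2)
    (hμ : ∀ m i, μ m i ∈ Set.Ioo (0:ℝ) 1)
    (hα : α = (1 - 2*ε)/(1 - ε)) :
    ∀ (n : ℕ) (σ : List Bool → Fin I) (rs : Fin n → Bool)
      {b₁ b₂ : Fin M → ℝ}, IsBelief b₁ → IsBelief b₂ →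
      l1 (treeH P μ n σ b₁ rs) (treeH P μ n σ b₂ rs)
        ≤ α ^ n * l1 (bayes b₁ (fun m => treeLaw P μ n σ m rs))
                     (bayes b₂ (fun m => treeLaw P μ n σ m rs)) := by
  have hα0 : 0 ≤ α := by
    rw [hα]; apply div_nonneg <;> linarith
  intro n
  induction n with
  | zero =>
      intro σ rs b₁ b₂ hb₁ hb₂
      simp only [treeH, treeLaw, pow_zero, one_mul]
      rw [bayes_one hb₁, bayes_one hb₂]
  | succ n ih =>
      intro σ rs b₁ b₂ hb₁ hb₂
      have hg' : ∀ m, 0 < treeLaw P μ n (shiftT σ (rs 0)) m (Fin.tail rs) :=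
        fun m => treeLaw_pos hPl hε0 (by omega) hμ n _ m _
      calc l1 (treeH P μ (n+1) σ b₁ rs) (treeH P μ (n+1) σ b₂ rs)
          = l1 (treeH P μ n (shiftT σ (rs 0)) (Hupd P μ b₁ (σ []) (rs 0)) (Fin.tail rs))
               (treeH P μ n (shiftT σ (rs 0)) (Hupd P μ b₂ (σ []) (rs 0)) (Fin.tail rs)) := rfl
        _ ≤ α ^ n * l1
              (bayes (Hupd P μ b₁ (σ []) (rs 0)) (fun m => treeLaw P μ n (shiftT σ (rs 0)) m (Fin.tail rs)))
              (bayes (Hupd P μ b₂ (σ []) (rs 0)) (fun m => treeLaw P μ n (shiftT σ (rs 0)) m (Fin.tail rs))) :=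
            ih _ _ (Hupd_isBelief hP hμ hb₁ _ _) (Hupd_isBelief hP hμ hb₂ _ _)
        _ ≤ α ^ n * (α * l1 (bayes b₁ (fun m => treeLaw P μ (n+1) σ m rs))
                            (bayes b₂ (fun m => treeLaw P μ (n+1) σ m rs))) := by
            refine mul_le_mul_of_nonneg_left ?_ (pow_nonneg hα0 n)
            have := contraction_step hM hP hPl hε0 hεh hμ hα hb₁ hb₂ (σ []) (rs 0) hg'
            exact this
        _ = α ^ (n+1) * l1 (bayes b₁ (fun m => treeLaw P μ (n+1) σ m rs))
                           (bayes b₂ (fun m => treeLaw P μ (n+1) σ m rs)) := by ring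

/-- Averaged filter stability. -/
theorem filter_stability (hM : 2 ≤ M) (hP : RowStochastic P)
    (hPl : ∀ m m', ε ≤ P m m') (hε0 : 0 < ε) (hεh : ε < 1/2)
    (hμ : ∀ m i, μ m i ∈ Set.Ioo (0:ℝ) 1)
    (hα : α = (1 - 2*ε)/(1 - ε))
    (n : ℕ) (σ : List Bool → Fin I) {b₁ b₂ : Fin M → ℝ}
    (hb₁ : IsBelief b₁) (hb₂ : IsBelief b₂) :
    ∑ rs : Fin n → Bool, treeQ P μ n σ b₁ rs *
        l1 (treeH P μ n σ b₁ rs) (treeH P μ n σ b₂ rs)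
      ≤ 2 * α ^ n * l1 b₁ b₂ := by
  have hα0 : 0 ≤ α := by
    rw [hα]; apply div_nonneg <;> linarith
  have hMpos : 0 < M := by omega
  have hg : ∀ rs : Fin n → Bool, ∀ m, 0 < treeLaw P μ n σ m rs :=
    fun rs m => treeLaw_pos hPl hε0 hMpos hμ n σ m rs
  calc ∑ rs : Fin n → Bool, treeQ P μ n σ b₁ rs *
        l1 (treeH P μ n σ b₁ rs) (treeH P μ n σ b₂ rs)
      ≤ ∑ rs : Fin n → Bool, α ^ n * (∑ m, b₁ m * treeLaw P μ n σ m rs) *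
          l1 (bayes b₁ (fun m => treeLaw P μ n σ m rs))
             (bayes b₂ (fun m => treeLaw P μ n σ m rs)) := by
        refine Finset.sum_le_sum fun rs _ => ?_
        have hQpos : 0 ≤ treeQ P μ n σ b₁ rs :=
          Finset.sum_nonneg fun m _ => mul_nonneg (hb₁.1 m) (hg rs m).le
        calc treeQ P μ n σ b₁ rs * l1 (treeH P μ n σ b₁ rs) (treeH P μ n σ b₂ rs)
            ≤ treeQ P μ n σ b₁ rs * (α ^ n * l1 (bayes b₁ (fun m => treeLaw P μ n σ m rs))
                (bayes b₂ (fun m => treeLaw P μ n σ m rs))) :=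
              mul_le_mul_of_nonneg_left
                (treeH_contract hM hP hPl hε0 hεh hμ hα n σ rs hb₁ hb₂) hQpos
          _ = α ^ n * (∑ m, b₁ m * treeLaw P μ n σ m rs) *
                l1 (bayes b₁ (fun m => treeLaw P μ n σ m rs))
                   (bayes b₂ (fun m => treeLaw P μ n σ m rs)) := by
              rw [treeQ]; ring
    _ ≤ ∑ rs : Fin n → Bool, α ^ n *
          (∑ m, treeLaw P μ n σ m rs * |b₁ m - b₂ m|
            + |∑ m, treeLaw P μ n σ m rs * (b₁ m - b₂ m)|) := by
        refine Finset.sum_le_sum fun rs _ => ?_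
        rw [mul_assoc]
        refine mul_le_mul_of_nonneg_left ?_ (pow_nonneg hα0 n)
        exact bayes_weighted_l1 hb₁ hb₂ (hg rs)
    _ ≤ ∑ rs : Fin n → Bool, α ^ n *
          (∑ m, treeLaw P μ n σ m rs * |b₁ m - b₂ m|
            + ∑ m, treeLaw P μ n σ m rs * |b₁ m - b₂ m|) := by
        refine Finset.sum_le_sum fun rs _ => ?_
        refine mul_le_mul_of_nonneg_left ?_ (pow_nonneg hα0 n)
        refine add_le_add_right ?_ _
        refine (Finset.abs_sum_le_sum_abs _ _).trans ?_
        refine Finset.sum_le_sum fun m _ => ?_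
        rw [abs_mul, abs_of_pos (hg rs m)]
    _ = 2 * α ^ n * ∑ m, (∑ rs : Fin n → Bool, treeLaw P μ n σ m rs) * |b₁ m - b₂ m| := by
        have hterm : ∀ rs : Fin n → Bool, α ^ n *
            ((∑ m, treeLaw P μ n σ m rs * |b₁ m - b₂ m|)
              + ∑ m, treeLaw P μ n σ m rs * |b₁ m - b₂ m|)
            = 2 * α ^ n * ∑ m, treeLaw P μ n σ m rs * |b₁ m - b₂ m| := fun rs => by ring
        rw [Finset.sum_congr rfl fun rs _ => hterm rs, ← Finset.mul_sum, Finset.sum_comm]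
        refine congrArg _ (Finset.sum_congr rfl fun m _ => ?_)
        rw [Finset.sum_mul]
    _ = 2 * α ^ n * l1 b₁ b₂ := by
        rw [l1]
        refine congrArg _ (Finset.sum_congr rfl fun m _ => ?_)
        rw [treeLaw_sum hP hμ n σ m, one_mul]

end Filter
section TreeMore
variable {M I : ℕ} {P : Fin M → Fin M → ℝ} {μ : Fin M → Fin I → ℝ} {ε : ℝ}

theorem treeQ_nonneg (hPl : ∀ m m', ε ≤ P m m') (hε0 : 0 < ε) (hMpos : 0 < M)
    (hμ : ∀ m i, μ m i ∈ Set.Ioo (0:ℝ) 1) {b : Fin M → ℝ} (hb : IsBelief b)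
    (n : ℕ) (σ : List Bool → Fin I) (rs : Fin n → Bool) : 0 ≤ treeQ P μ n σ b rs :=
  Finset.sum_nonneg fun m _ => mul_nonneg (hb.1 m)
    (treeLaw_pos hPl hε0 hMpos hμ n σ m rs).le

theorem treeQ_sum_one (hP : RowStochastic P) (hμ : ∀ m i, μ m i ∈ Set.Ioo (0:ℝ) 1)
    {b : Fin M → ℝ} (hb : IsBelief b) (n : ℕ) (σ : List Bool → Fin I) :
    ∑ rs : Fin n → Bool, treeQ P μ n σ b rs = 1 := by
  unfold treeQ
  rw [Finset.sum_comm]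
  rw [Finset.sum_congr rfl fun m (_ : m ∈ Finset.univ) => by
    rw [← Finset.mul_sum, treeLaw_sum hP hμ n σ m, mul_one]]
  exact hb.2

theorem treeQ_TV (hP : RowStochastic P) (hPl : ∀ m m', ε ≤ P m m') (hε0 : 0 < ε)
    (hMpos : 0 < M) (hμ : ∀ m i, μ m i ∈ Set.Ioo (0:ℝ) 1)
    {b₁ b₂ : Fin M → ℝ} (hb₁ : IsBelief b₁) (hb₂ : IsBelief b₂)
    (n : ℕ) (σ : List Bool → Fin I) :
    ∑ rs : Fin n → Bool, |treeQ P μ n σ b₁ rs - treeQ P μ n σ b₂ rs| ≤ l1 b₁ b₂ := by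
  calc ∑ rs : Fin n → Bool, |treeQ P μ n σ b₁ rs - treeQ P μ n σ b₂ rs|
      ≤ ∑ rs : Fin n → Bool, ∑ m, treeLaw P μ n σ m rs * |b₁ m - b₂ m| := by
        refine Finset.sum_le_sum fun rs _ => ?_
        unfold treeQ
        rw [← Finset.sum_sub_distrib]
        refine (Finset.abs_sum_le_sum_abs _ _).trans ?_
        refine Finset.sum_le_sum fun m _ => le_of_eq ?_
        rw [show b₁ m * treeLaw P μ n σ m rs - b₂ m * treeLaw P μ n σ m rs
            = treeLaw P μ n σ m rs * (b₁ m - b₂ m) from by ring, abs_mul]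
        rw [abs_of_pos (treeLaw_pos hPl hε0 hMpos hμ n σ m rs)]
    _ = l1 b₁ b₂ := by
        rw [Finset.sum_comm, l1]
        refine Finset.sum_congr rfl fun m _ => ?_
        rw [← Finset.sum_mul, treeLaw_sum hP hμ n σ m, one_mul]

theorem treeH_cons (n : ℕ) (σ : List Bool → Fin I) (b : Fin M → ℝ) (r : Bool)
    (rs : Fin n → Bool) :
    treeH P μ (n+1) σ b (Fin.cons r rs)
      = treeH P μ n (shiftT σ r) (Hupd P μ b (σ []) r) rs := by
  simp only [treeH, Fin.cons_zero, Fin.tail_cons]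

theorem treeQ_cons (hμ : ∀ m i, μ m i ∈ Set.Ioo (0:ℝ) 1) {b : Fin M → ℝ} (hb : IsBelief b)
    (n : ℕ) (σ : List Bool → Fin I) (r : Bool) (rs : Fin n → Bool) :
    treeQ P μ (n+1) σ b (Fin.cons r rs)
      = pObs μ b (σ []) r * treeQ P μ n (shiftT σ r) (Hupd P μ b (σ []) r) rs := by
  have hp : 0 < pObs μ b (σ []) r := pObs_pos hμ hb _ r
  unfold treeQ
  rw [Finset.mul_sum]
  rw [Finset.sum_congr rfl fun m' (_ : m' ∈ Finset.univ) => show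
    pObs μ b (σ []) r * (Hupd P μ b (σ []) r m' * treeLaw P μ n (shiftT σ r) m' rs)
      = (∑ m, P m m' * (bern (μ m (σ [])) r * b m)) * treeLaw P μ n (shiftT σ r) m' rs from by
      rw [show Hupd P μ b (σ []) r m'
          = (∑ m, P m m' * (bern (μ m (σ [])) r * b m)) / pObs μ b (σ []) r from rfl]
      field_simp]
  have lhs_eq : ∀ m, b m * treeLaw P μ (n+1) σ m (Fin.cons r rs)
      = ∑ m', P m m' * (bern (μ m (σ [])) r * b m) * treeLaw P μ n (shiftT σ r) m' rs := by
    intro m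
    simp only [treeLaw, Fin.cons_zero, Fin.tail_cons]
    rw [Finset.mul_sum, Finset.mul_sum]
    exact Finset.sum_congr rfl fun m' _ => by ring
  rw [Finset.sum_congr rfl fun m _ => lhs_eq m, Finset.sum_comm]
  refine Finset.sum_congr rfl fun m' _ => ?_
  rw [Finset.sum_mul]

theorem treeH_isBelief (hP : RowStochastic P) (hμ : ∀ m i, μ m i ∈ Set.Ioo (0:ℝ) 1) :
    ∀ (n : ℕ) (σ : List Bool → Fin I) {b : Fin M → ℝ}, IsBelief b →
      ∀ (rs : Fin n → Bool), IsBelief (treeH P μ n σ b rs) := by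
  intro n
  induction n with
  | zero => intro σ b hb rs; exact hb
  | succ n ih =>
      intro σ b hb rs
      exact ih _ (Hupd_isBelief hP hμ hb _ _) _

theorem treeH_entry_ge (hP : RowStochastic P) (hPl : ∀ m m', ε ≤ P m m')
    (hμ : ∀ m i, μ m i ∈ Set.Ioo (0:ℝ) 1) (hε0 : 0 < ε) :
    ∀ (n : ℕ) (σ : List Bool → Fin I) {b : Fin M → ℝ}, IsBelief b →
      (∀ m, ε ≤ b m) → ∀ (rs : Fin n → Bool) (m : Fin M), ε ≤ treeH P μ n σ b rs m := by
  intro n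
  induction n with
  | zero => intro σ b hb hbe rs m; exact hbe m
  | succ n ih =>
      intro σ b hb hbe rs m
      exact ih _ (Hupd_isBelief hP hμ hb _ _)
        (fun m' => Hupd_entry_ge hP hPl hμ hε0 hb _ _ m') _ m

theorem l1_le_diam (hMε : (0:ℝ) ≤ ε) {c₁ c₂ : Fin M → ℝ}
    (hc₁ : IsBelief c₁) (hc₂ : IsBelief c₂)
    (h₁ : ∀ m, ε ≤ c₁ m) (h₂ : ∀ m, ε ≤ c₂ m) :
    l1 c₁ c₂ ≤ 2 * (1 - M * ε) := by
  have habs : ∀ m, |c₁ m - c₂ m| = 2 * max (c₁ m - c₂ m) 0 - (c₁ m - c₂ m) := by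
    intro m
    rcases le_or_gt (c₂ m) (c₁ m) with h | h
    · rw [max_eq_left (by linarith), abs_of_nonneg (by linarith)]; ring
    · rw [max_eq_right (by linarith), abs_of_neg (by linarith)]; ring
  have hsum0 : ∑ m, (c₁ m - c₂ m) = 0 := by
    rw [Finset.sum_sub_distrib, hc₁.2, hc₂.2, sub_self]
  calc l1 c₁ c₂ = 2 * ∑ m, max (c₁ m - c₂ m) 0 := by
        rw [l1, Finset.sum_congr rfl fun m _ => habs m, Finset.sum_sub_distrib,
          hsum0, sub_zero, ← Finset.mul_sum]
    _ ≤ 2 * ∑ m, (c₁ m - ε) := by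
        refine mul_le_mul_of_nonneg_left (Finset.sum_le_sum fun m _ => ?_) (by norm_num)
        refine max_le (by linarith [h₂ m]) (by linarith [h₁ m])
    _ = 2 * (1 - M * ε) := by
        rw [Finset.sum_sub_distrib, hc₁.2, Finset.sum_const, Finset.card_univ,
          Fintype.card_fin, nsmul_eq_mul]

theorem cb_lipschitz (hμ : ∀ m i, μ m i ∈ Set.Ioo (0:ℝ) 1)
    {c₁ c₂ : Fin M → ℝ} (hc₁ : IsBelief c₁) (hc₂ : IsBelief c₂) (i : Fin I) :
    |(∑ m, μ m i * c₁ m) - ∑ m, μ m i * c₂ m| ≤ (1/2) * l1 c₁ c₂ := by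
  have hsum0 : ∑ m, (c₁ m - c₂ m) = 0 := by
    rw [Finset.sum_sub_distrib, hc₁.2, hc₂.2, sub_self]
  have key : (∑ m, μ m i * c₁ m) - ∑ m, μ m i * c₂ m
      = ∑ m, (μ m i - 1/2) * (c₁ m - c₂ m) := by
    rw [Finset.sum_congr rfl fun m (_ : m ∈ Finset.univ) => show
      (μ m i - 1/2) * (c₁ m - c₂ m)
        = (μ m i * c₁ m - μ m i * c₂ m) - (1/2) * (c₁ m - c₂ m) from by ring]
    rw [Finset.sum_sub_distrib, ← Finset.mul_sum, hsum0, mul_zero, sub_zero,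
      Finset.sum_sub_distrib]
  rw [key]
  refine (Finset.abs_sum_le_sum_abs _ _).trans ?_
  rw [l1, Finset.mul_sum]
  refine Finset.sum_le_sum fun m _ => ?_
  rw [abs_mul]
  refine mul_le_mul_of_nonneg_right ?_ (abs_nonneg _)
  rw [abs_le]
  constructor <;> linarith [(hμ m i).1, (hμ m i).2]

theorem cb_mem (hμ : ∀ m i, μ m i ∈ Set.Ioo (0:ℝ) 1)
    {c : Fin M → ℝ} (hc : IsBelief c) (i : Fin I) :
    |(∑ m, μ m i * c m) - 1/2| ≤ 1/2 := by
  have h0 : 0 ≤ ∑ m, μ m i * c m :=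
    Finset.sum_nonneg fun m _ => mul_nonneg (hμ m i).1.le (hc.1 m)
  have h1 : (∑ m, μ m i * c m) ≤ 1 := by
    calc (∑ m, μ m i * c m) ≤ ∑ m, c m :=
          Finset.sum_le_sum fun m _ => by
            nlinarith [(hμ m i).2, hc.1 m, (hμ m i).1]
      _ = 1 := hc.2
  rw [abs_le]; constructor <;> linarith

end TreeMore
def endArm {I : ℕ} : (n : ℕ) → (List Bool → Fin I) → (Fin n → Bool) → Fin I
  | 0, σ, _ => σ []
  | n+1, σ, rs => endArm n (shiftT σ (rs 0)) (Fin.tail rs)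

noncomputable def Aterm {M I : ℕ} (P : Fin M → Fin M → ℝ) (μ : Fin M → Fin I → ℝ)
    (n : ℕ) (σ : List Bool → Fin I) (b : Fin M → ℝ) : ℝ :=
  ∑ rs : Fin n → Bool, treeQ P μ n σ b rs *
    ∑ m, μ m (endArm n σ rs) * treeH P μ n σ b rs m

noncomputable def Bterm {M I : ℕ} (P : Fin M → Fin M → ℝ) (μ : Fin M → Fin I → ℝ)
    (β : ℝ) (j : ℕ) (n : ℕ) (σ : List Bool → Fin I) (b : Fin M → ℝ) : ℝ :=
  ∑ rs : Fin n → Bool, treeQ P μ n σ b rs * Vfin P μ β j (treeH P μ n σ b rs)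

section JvalLemmas
variable {M I : ℕ} {P : Fin M → Fin M → ℝ} {μ : Fin M → Fin I → ℝ} {ε β : ℝ} {j : ℕ}

theorem Vfin_succ (b : Fin M → ℝ) (n : ℕ) :
    Vfin P μ β (n+1) b = ⨆ i : Fin I, ((∑ m, μ m i * b m) +
      β * ∑ r : Bool, pObs μ b i r * Vfin P μ β n (Hupd P μ b i r)) := rfl

theorem Jval_le_Vfin (hP : RowStochastic P) (hμ : ∀ m i, μ m i ∈ Set.Ioo (0:ℝ) 1)
    (hI : 0 < I) (hβ : 0 ≤ β) :
    ∀ (n : ℕ) (σ : List Bool → Fin I) {b : Fin M → ℝ}, IsBelief b →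
      Jval P μ β j n σ b ≤ Vfin P μ β (j + n) b := by
  intro n
  induction n with
  | zero => intro σ b hb; exact le_of_eq rfl
  | succ n ih =>
      intro σ b hb
      rw [show j + (n+1) = (j+n) + 1 from rfl, Vfin_succ]
      have step : Jval P μ β j (n+1) σ b ≤ (∑ m, μ m (σ []) * b m) +
          β * ∑ r : Bool, pObs μ b (σ []) r * Vfin P μ β (j+n) (Hupd P μ b (σ []) r) := by
        show (∑ m, μ m (σ []) * b m) + β * ∑ r : Bool, pObs μ b (σ []) r *
            Jval P μ β j n (shiftT σ r) (Hupd P μ b (σ []) r) ≤ _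
        refine add_le_add_right (mul_le_mul_of_nonneg_left ?_ hβ) _
        refine Finset.sum_le_sum fun r _ => ?_
        refine mul_le_mul_of_nonneg_left ?_ (pObs_pos hμ hb _ r).le
        exact ih (shiftT σ r) (Hupd_isBelief hP hμ hb _ _)
      refine step.trans ?_
      exact le_ciSup (f := fun i : Fin I => (∑ m, μ m i * b m) +
          β * ∑ r : Bool, pObs μ b i r * Vfin P μ β (j+n) (Hupd P μ b i r))
        (Set.Finite.bddAbove (Set.finite_range _)) (σ [])

theorem exists_opt_tree (hP : RowStochastic P) (hμ : ∀ m i, μ m i ∈ Set.Ioo (0:ℝ) 1)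
    (hI : 0 < I) :
    ∀ (n : ℕ) {b : Fin M → ℝ}, IsBelief b →
      ∃ σ : List Bool → Fin I, Vfin P μ β (j + n) b = Jval P μ β j n σ b := by
  have hne : Nonempty (Fin I) := ⟨⟨0, hI⟩⟩
  intro n
  induction n with
  | zero => intro b hb; exact ⟨fun _ => ⟨0, hI⟩, rfl⟩
  | succ n ih =>
      intro b hb
      obtain ⟨i₀, hi₀⟩ := Finite.exists_max (fun i : Fin I => (∑ m, μ m i * b m) +
        β * ∑ r : Bool, pObs μ b i r * Vfin P μ β (j+n) (Hupd P μ b i r))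
      have hsup : Vfin P μ β (j + (n+1)) b = (∑ m, μ m i₀ * b m) +
          β * ∑ r : Bool, pObs μ b i₀ r * Vfin P μ β (j+n) (Hupd P μ b i₀ r) := by
        rw [show j + (n+1) = (j+n) + 1 from rfl, Vfin_succ]
        exact le_antisymm (ciSup_le hi₀)
          (le_ciSup (f := fun i : Fin I => (∑ m, μ m i * b m) +
              β * ∑ r : Bool, pObs μ b i r * Vfin P μ β (j+n) (Hupd P μ b i r))
            (Set.Finite.bddAbove (Set.finite_range _)) i₀)
      choose σr hσr using fun r : Bool => ih (Hupd_isBelief hP hμ hb i₀ r)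
      refine ⟨fun l => match l with | [] => i₀ | r :: l' => σr r l', ?_⟩
      have key : Jval P μ β j (n+1) (fun l => match l with | [] => i₀ | r :: l' => σr r l') b
          = (∑ m, μ m i₀ * b m) +
            β * ∑ r : Bool, pObs μ b i₀ r * Vfin P μ β (j+n) (Hupd P μ b i₀ r) := by
        show (∑ m, μ m i₀ * b m) + β * ∑ r : Bool, pObs μ b i₀ r *
            Jval P μ β j n (σr r) (Hupd P μ b i₀ r) = _
        congr 1
        refine congrArg (β * ·) (Finset.sum_congr rfl fun r _ => ?_)
        rw [← hσr r]
      rw [hsup, key]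

theorem Jval_expand (hP : RowStochastic P) (hμ : ∀ m i, μ m i ∈ Set.Ioo (0:ℝ) 1) :
    ∀ (n : ℕ) (σ : List Bool → Fin I) {b : Fin M → ℝ}, IsBelief b →
      Jval P μ β j n σ b = (∑ t ∈ Finset.range n, β ^ t * Aterm P μ t σ b)
        + β ^ n * Bterm P μ β j n σ b := by
  intro n
  induction n with
  | zero =>
      intro σ b hb
      simp [Bterm, treeQ, treeLaw, treeH, Jval, hb.2]
  | succ n ih =>
      intro σ b hb
      have hA0 : Aterm P μ 0 σ b = ∑ m, μ m (σ []) * b m := by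
        simp [Aterm, treeQ, treeLaw, treeH, endArm, hb.2]
      have hAstep : ∀ t, Aterm P μ (t+1) σ b
          = ∑ r : Bool, pObs μ b (σ []) r * Aterm P μ t (shiftT σ r) (Hupd P μ b (σ []) r) := by
        intro t
        rw [Aterm, sum_pi_succ]
        refine Finset.sum_congr rfl fun r _ => ?_
        rw [Aterm, Finset.mul_sum]
        refine Finset.sum_congr rfl fun rs _ => ?_
        rw [treeQ_cons hμ hb, treeH_cons,
          show endArm (t+1) σ (Fin.cons r rs) = endArm t (shiftT σ r) rs from by
            simp [endArm, Fin.cons_zero, Fin.tail_cons]]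
        ring
      have hBstep : Bterm P μ β j (n+1) σ b
          = ∑ r : Bool, pObs μ b (σ []) r * Bterm P μ β j n (shiftT σ r) (Hupd P μ b (σ []) r) := by
        rw [Bterm, sum_pi_succ]
        refine Finset.sum_congr rfl fun r _ => ?_
        rw [Bterm, Finset.mul_sum]
        refine Finset.sum_congr rfl fun rs _ => ?_
        rw [treeQ_cons hμ hb, treeH_cons]
        ring
      calc Jval P μ β j (n+1) σ b
          = (∑ m, μ m (σ []) * b m) + β * ∑ r : Bool, pObs μ b (σ []) r *
              Jval P μ β j n (shiftT σ r) (Hupd P μ b (σ []) r) := rfl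
        _ = Aterm P μ 0 σ b + β * ∑ r : Bool, pObs μ b (σ []) r *
              ((∑ t ∈ Finset.range n, β ^ t * Aterm P μ t (shiftT σ r) (Hupd P μ b (σ []) r))
                + β ^ n * Bterm P μ β j n (shiftT σ r) (Hupd P μ b (σ []) r)) := by
            rw [hA0]
            congr 1
            refine congrArg (β * ·) (Finset.sum_congr rfl fun r _ => ?_)
            rw [ih (shiftT σ r) (Hupd_isBelief hP hμ hb _ _)]
        _ = Aterm P μ 0 σ b
            + (∑ t ∈ Finset.range n, β ^ (t+1) *
                ∑ r : Bool, pObs μ b (σ []) r * Aterm P μ t (shiftT σ r) (Hupd P μ b (σ []) r))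
            + β ^ (n+1) *
                ∑ r : Bool, pObs μ b (σ []) r * Bterm P μ β j n (shiftT σ r) (Hupd P μ b (σ []) r) := by
            rw [add_assoc]
            congr 1
            rw [Finset.sum_congr rfl fun r (_ : r ∈ Finset.univ) => mul_add
              (pObs μ b (σ []) r) _ _, Finset.sum_add_distrib, mul_add]
            congr 1
            · rw [Finset.mul_sum]
              rw [Finset.sum_congr rfl fun r (_ : r ∈ Finset.univ) => show
                β * (pObs μ b (σ []) r * ∑ t ∈ Finset.range n, β ^ t *
                    Aterm P μ t (shiftT σ r) (Hupd P μ b (σ []) r))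
                  = ∑ t ∈ Finset.range n, β ^ (t+1) * (pObs μ b (σ []) r *
                    Aterm P μ t (shiftT σ r) (Hupd P μ b (σ []) r)) from by
                  rw [Finset.mul_sum, Finset.mul_sum]
                  exact Finset.sum_congr rfl fun t _ => by ring]
              rw [Finset.sum_comm]
              exact Finset.sum_congr rfl fun t _ => by rw [Finset.mul_sum]
            · rw [Finset.mul_sum, Finset.mul_sum]
              exact Finset.sum_congr rfl fun r _ => by ring
        _ = (∑ t ∈ Finset.range (n+1), β ^ t * Aterm P μ t σ b)
              + β ^ (n+1) * Bterm P μ β j (n+1) σ b := by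
            have hAll : (∑ t ∈ Finset.range n, β^(t+1) * Aterm P μ (t+1) σ b)
                = ∑ t ∈ Finset.range n, β^(t+1) * ∑ r : Bool, pObs μ b (σ []) r *
                    Aterm P μ t (shiftT σ r) (Hupd P μ b (σ []) r) :=
              Finset.sum_congr rfl fun t _ => by rw [hAstep t]
            rw [hBstep, Finset.sum_range_succ', hAll, pow_zero, one_mul, hA0]
            ring

end JvalLemmas
section Estimates
variable {M I : ℕ} {P : Fin M → Fin M → ℝ} {μ : Fin M → Fin I → ℝ} {ε α β : ℝ} {j : ℕ}

theorem Aterm_diff (hM : 2 ≤ M) (hP : RowStochastic P)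
    (hPl : ∀ m m', ε ≤ P m m') (hε0 : 0 < ε) (hεh : ε < 1/2)
    (hμ : ∀ m i, μ m i ∈ Set.Ioo (0:ℝ) 1) (hα : α = (1 - 2*ε)/(1 - ε))
    (t : ℕ) (σ : List Bool → Fin I) {b₁ b₂ : Fin M → ℝ}
    (hb₁ : IsBelief b₁) (hb₂ : IsBelief b₂) :
    Aterm P μ t σ b₁ - Aterm P μ t σ b₂ ≤ (α ^ t + 1/2) * l1 b₁ b₂ := by
  have hMpos : 0 < M := by omega
  have hQ1 : ∀ rs, 0 ≤ treeQ P μ t σ b₁ rs := treeQ_nonneg hPl hε0 hMpos hμ hb₁ t σ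
  have hkey : ∀ rs : Fin t → Bool,
      treeQ P μ t σ b₁ rs * (∑ m, μ m (endArm t σ rs) * treeH P μ t σ b₁ rs m)
        - treeQ P μ t σ b₂ rs * (∑ m, μ m (endArm t σ rs) * treeH P μ t σ b₂ rs m)
      = treeQ P μ t σ b₁ rs *
          ((∑ m, μ m (endArm t σ rs) * treeH P μ t σ b₁ rs m)
            - ∑ m, μ m (endArm t σ rs) * treeH P μ t σ b₂ rs m)
        + (treeQ P μ t σ b₁ rs - treeQ P μ t σ b₂ rs) *
            ((∑ m, μ m (endArm t σ rs) * treeH P μ t σ b₂ rs m) - 1/2)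
        + (1/2) * (treeQ P μ t σ b₁ rs - treeQ P μ t σ b₂ rs) := fun rs => by ring
  rw [Aterm, Aterm, ← Finset.sum_sub_distrib,
    Finset.sum_congr rfl fun rs _ => hkey rs, Finset.sum_add_distrib,
    Finset.sum_add_distrib]
  have hzero : ∑ rs : Fin t → Bool,
      (1/2) * (treeQ P μ t σ b₁ rs - treeQ P μ t σ b₂ rs) = 0 := by
    rw [← Finset.mul_sum, Finset.sum_sub_distrib, treeQ_sum_one hP hμ hb₁,
      treeQ_sum_one hP hμ hb₂, sub_self, mul_zero]
  rw [hzero, add_zero]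
  have h1 : ∑ rs : Fin t → Bool, treeQ P μ t σ b₁ rs *
      ((∑ m, μ m (endArm t σ rs) * treeH P μ t σ b₁ rs m)
        - ∑ m, μ m (endArm t σ rs) * treeH P μ t σ b₂ rs m)
      ≤ α ^ t * l1 b₁ b₂ := by
    have : ∀ rs : Fin t → Bool, treeQ P μ t σ b₁ rs *
        ((∑ m, μ m (endArm t σ rs) * treeH P μ t σ b₁ rs m)
          - ∑ m, μ m (endArm t σ rs) * treeH P μ t σ b₂ rs m)
        ≤ treeQ P μ t σ b₁ rs *
            ((1/2) * l1 (treeH P μ t σ b₁ rs) (treeH P μ t σ b₂ rs)) := by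
      intro rs
      refine mul_le_mul_of_nonneg_left ?_ (hQ1 rs)
      exact (le_abs_self _).trans (cb_lipschitz hμ (treeH_isBelief hP hμ t σ hb₁ rs)
        (treeH_isBelief hP hμ t σ hb₂ rs) _)
    refine (Finset.sum_le_sum fun rs _ => this rs).trans ?_
    have := filter_stability hM hP hPl hε0 hεh hμ hα t σ hb₁ hb₂
    calc ∑ rs : Fin t → Bool, treeQ P μ t σ b₁ rs *
          ((1/2) * l1 (treeH P μ t σ b₁ rs) (treeH P μ t σ b₂ rs))
        = (1/2) * ∑ rs : Fin t → Bool, treeQ P μ t σ b₁ rs *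
            l1 (treeH P μ t σ b₁ rs) (treeH P μ t σ b₂ rs) := by
          rw [Finset.mul_sum]; exact Finset.sum_congr rfl fun rs _ => by ring
      _ ≤ (1/2) * (2 * α ^ t * l1 b₁ b₂) := by linarith
      _ = α ^ t * l1 b₁ b₂ := by ring
  have h2 : ∑ rs : Fin t → Bool, (treeQ P μ t σ b₁ rs - treeQ P μ t σ b₂ rs) *
      ((∑ m, μ m (endArm t σ rs) * treeH P μ t σ b₂ rs m) - 1/2)
      ≤ (1/2) * l1 b₁ b₂ := by
    have hstep : ∀ rs : Fin t → Bool, (treeQ P μ t σ b₁ rs - treeQ P μ t σ b₂ rs) *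
        ((∑ m, μ m (endArm t σ rs) * treeH P μ t σ b₂ rs m) - 1/2)
        ≤ |treeQ P μ t σ b₁ rs - treeQ P μ t σ b₂ rs| * (1/2) := by
      intro rs
      refine (le_abs_self _).trans ?_
      rw [abs_mul]
      exact mul_le_mul_of_nonneg_left
        (cb_mem hμ (treeH_isBelief hP hμ t σ hb₂ rs) _) (abs_nonneg _)
    refine (Finset.sum_le_sum fun rs _ => hstep rs).trans ?_
    rw [← Finset.sum_mul]
    have := treeQ_TV hP hPl hε0 hMpos hμ hb₁ hb₂ t σ
    linarith
  linarith

theorem Bterm_diff (hM : 2 ≤ M) (hP : RowStochastic P)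
    (hPl : ∀ m m', ε ≤ P m m') (hε0 : 0 < ε) (hεh : ε < 1/2)
    (hμ : ∀ m i, μ m i ∈ Set.Ioo (0:ℝ) 1) (hα : α = (1 - 2*ε)/(1 - ε))
    {Λ : ℝ} (hΛ0 : 0 ≤ Λ)
    (hLip : ∀ {c₁ c₂ : Fin M → ℝ}, IsBelief c₁ → IsBelief c₂ →
      |Vfin P μ β j c₁ - Vfin P μ β j c₂| ≤ Λ * l1 c₁ c₂)
    {n : ℕ} (hn : n ≠ 0) (σ : List Bool → Fin I) {b₁ b₂ : Fin M → ℝ}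
    (hb₁ : IsBelief b₁) (hb₂ : IsBelief b₂) :
    Bterm P μ β j n σ b₁ - Bterm P μ β j n σ b₂
      ≤ Λ * (2 * α ^ n + (1 - M * ε)) * l1 b₁ b₂ := by
  have hMpos : 0 < M := by omega
  have hQ1 : ∀ rs, 0 ≤ treeQ P μ n σ b₁ rs := treeQ_nonneg hPl hε0 hMpos hμ hb₁ n σ
  -- entries of treeH n σ b₂ are ≥ ε
  have hentry : ∀ (b : Fin M → ℝ), IsBelief b → ∀ (rs : Fin n → Bool) (m : Fin M),
      ε ≤ treeH P μ n σ b rs m := by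
    obtain ⟨n', rfl⟩ : ∃ n', n = n' + 1 := ⟨n - 1, by omega⟩
    intro b hb rs m
    show ε ≤ treeH P μ n' (shiftT σ (rs 0)) (Hupd P μ b (σ []) (rs 0)) (Fin.tail rs) m
    exact treeH_entry_ge hP hPl hμ hε0 n' _ (Hupd_isBelief hP hμ hb _ _)
      (fun m' => Hupd_entry_ge hP hPl hμ hε0 hb _ _ m') _ m
  -- midpoint of the values of V_j on reachable filters from b₂
  set v : (Fin n → Bool) → ℝ := fun rs => Vfin P μ β j (treeH P μ n σ b₂ rs) with hv
  obtain ⟨rsM, hrsM⟩ := Finite.exists_max v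
  obtain ⟨rsm, hrsm⟩ := Finite.exists_min v
  set c : ℝ := (v rsM + v rsm) / 2 with hc
  have hosc : ∀ rs, |v rs - c| ≤ Λ * (1 - M * ε) := by
    intro rs
    have hd : v rsM - v rsm ≤ Λ * (2 * (1 - M * ε)) := by
      refine le_trans (le_abs_self _) ?_
      refine (hLip (treeH_isBelief hP hμ n σ hb₂ rsM) (treeH_isBelief hP hμ n σ hb₂ rsm)).trans ?_
      refine mul_le_mul_of_nonneg_left ?_ hΛ0
      exact l1_le_diam hε0.le (treeH_isBelief hP hμ n σ hb₂ rsM)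
        (treeH_isBelief hP hμ n σ hb₂ rsm) (hentry b₂ hb₂ rsM) (hentry b₂ hb₂ rsm)
    rw [abs_le]
    constructor
    · have := hrsm rs; rw [hc]; nlinarith [hrsM rs]
    · have := hrsM rs; rw [hc]; nlinarith [hrsm rs]
  have hkey : ∀ rs : Fin n → Bool,
      treeQ P μ n σ b₁ rs * Vfin P μ β j (treeH P μ n σ b₁ rs)
        - treeQ P μ n σ b₂ rs * v rs
      = treeQ P μ n σ b₁ rs *
          (Vfin P μ β j (treeH P μ n σ b₁ rs) - v rs)
        + (treeQ P μ n σ b₁ rs - treeQ P μ n σ b₂ rs) * (v rs - c)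
        + c * (treeQ P μ n σ b₁ rs - treeQ P μ n σ b₂ rs) := fun rs => by ring
  rw [Bterm, Bterm, ← Finset.sum_sub_distrib,
    Finset.sum_congr rfl fun rs _ => hkey rs, Finset.sum_add_distrib,
    Finset.sum_add_distrib]
  have hzero : ∑ rs : Fin n → Bool,
      c * (treeQ P μ n σ b₁ rs - treeQ P μ n σ b₂ rs) = 0 := by
    rw [← Finset.mul_sum, Finset.sum_sub_distrib, treeQ_sum_one hP hμ hb₁,
      treeQ_sum_one hP hμ hb₂, sub_self, mul_zero]
  rw [hzero, add_zero]
  have h1 : ∑ rs : Fin n → Bool, treeQ P μ n σ b₁ rs *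
      (Vfin P μ β j (treeH P μ n σ b₁ rs) - v rs)
      ≤ Λ * (2 * α ^ n) * l1 b₁ b₂ := by
    have hstep : ∀ rs : Fin n → Bool, treeQ P μ n σ b₁ rs *
        (Vfin P μ β j (treeH P μ n σ b₁ rs) - v rs)
        ≤ treeQ P μ n σ b₁ rs *
            (Λ * l1 (treeH P μ n σ b₁ rs) (treeH P μ n σ b₂ rs)) := by
      intro rs
      refine mul_le_mul_of_nonneg_left ?_ (hQ1 rs)
      exact (le_abs_self _).trans (hLip (treeH_isBelief hP hμ n σ hb₁ rs)
        (treeH_isBelief hP hμ n σ hb₂ rs))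
    refine (Finset.sum_le_sum fun rs _ => hstep rs).trans ?_
    have hfs := filter_stability hM hP hPl hε0 hεh hμ hα n σ hb₁ hb₂
    calc ∑ rs : Fin n → Bool, treeQ P μ n σ b₁ rs *
          (Λ * l1 (treeH P μ n σ b₁ rs) (treeH P μ n σ b₂ rs))
        = Λ * ∑ rs : Fin n → Bool, treeQ P μ n σ b₁ rs *
            l1 (treeH P μ n σ b₁ rs) (treeH P μ n σ b₂ rs) := by
          rw [Finset.mul_sum]; exact Finset.sum_congr rfl fun rs _ => by ring
      _ ≤ Λ * (2 * α ^ n * l1 b₁ b₂) := mul_le_mul_of_nonneg_left hfs hΛ0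
      _ = Λ * (2 * α ^ n) * l1 b₁ b₂ := by ring
  have h2 : ∑ rs : Fin n → Bool, (treeQ P μ n σ b₁ rs - treeQ P μ n σ b₂ rs) * (v rs - c)
      ≤ Λ * (1 - M * ε) * l1 b₁ b₂ := by
    have hstep : ∀ rs : Fin n → Bool,
        (treeQ P μ n σ b₁ rs - treeQ P μ n σ b₂ rs) * (v rs - c)
        ≤ |treeQ P μ n σ b₁ rs - treeQ P μ n σ b₂ rs| * (Λ * (1 - M * ε)) := by
      intro rs
      refine (le_abs_self _).trans ?_
      rw [abs_mul]
      exact mul_le_mul_of_nonneg_left (hosc rs) (abs_nonneg _)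
    refine (Finset.sum_le_sum fun rs _ => hstep rs).trans ?_
    rw [← Finset.sum_mul]
    have hTV := treeQ_TV hP hPl hε0 hMpos hμ hb₁ hb₂ n σ
    have hMε : 0 ≤ 1 - (M:ℝ) * ε := by
      have hrow := hP.2 ⟨0, hMpos⟩
      have : (M:ℝ) * ε ≤ ∑ m', P ⟨0, hMpos⟩ m' := by
        calc (M:ℝ) * ε = ∑ _m' : Fin M, ε := by
              rw [Finset.sum_const, Finset.card_univ, Fintype.card_fin, nsmul_eq_mul]
          _ ≤ ∑ m', P ⟨0, hMpos⟩ m' := Finset.sum_le_sum fun m' _ => hPl _ m'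
      rw [hrow] at this; linarith
    have h0 : 0 ≤ Λ * (1 - M * ε) := mul_nonneg hΛ0 hMε
    calc (∑ rs : Fin n → Bool, |treeQ P μ n σ b₁ rs - treeQ P μ n σ b₂ rs|)
          * (Λ * (1 - M * ε))
        ≤ l1 b₁ b₂ * (Λ * (1 - M * ε)) := mul_le_mul_of_nonneg_right hTV h0
      _ = Λ * (1 - M * ε) * l1 b₁ b₂ := by ring
  nlinarith [h1, h2]

end Estimates
section Block
variable {M I : ℕ} {P : Fin M → Fin M → ℝ} {μ : Fin M → Fin I → ℝ} {ε α β : ℝ} {j : ℕ}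

theorem block_lemma (hM : 2 ≤ M) (hI : 0 < I) (hP : RowStochastic P)
    (hPl : ∀ m m', ε ≤ P m m') (hε0 : 0 < ε) (hεh : ε < 1/2)
    (hμ : ∀ m i, μ m i ∈ Set.Ioo (0:ℝ) 1) (hα : α = (1 - 2*ε)/(1 - ε))
    (hβ : β ∈ Set.Ioo (0:ℝ) 1)
    {Λ : ℝ} (hΛ0 : 0 ≤ Λ)
    (hLip : ∀ {c₁ c₂ : Fin M → ℝ}, IsBelief c₁ → IsBelief c₂ →
      |Vfin P μ β j c₁ - Vfin P μ β j c₂| ≤ Λ * l1 c₁ c₂)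
    {n : ℕ} (hn : n ≠ 0) {b₁ b₂ : Fin M → ℝ}
    (hb₁ : IsBelief b₁) (hb₂ : IsBelief b₂) :
    |Vfin P μ β (j + n) b₁ - Vfin P μ β (j + n) b₂|
      ≤ ((∑ t ∈ Finset.range n, β ^ t * (α ^ t + 1/2))
          + β ^ n * (Λ * (2 * α ^ n + (1 - M * ε)))) * l1 b₁ b₂ := by
  have oneside : ∀ {c₁ c₂ : Fin M → ℝ}, IsBelief c₁ → IsBelief c₂ →
      Vfin P μ β (j + n) c₁ - Vfin P μ β (j + n) c₂
        ≤ ((∑ t ∈ Finset.range n, β ^ t * (α ^ t + 1/2))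
            + β ^ n * (Λ * (2 * α ^ n + (1 - M * ε)))) * l1 c₁ c₂ := by
    intro c₁ c₂ hc₁ hc₂
    obtain ⟨σ, hσ⟩ := exists_opt_tree hP hμ hI n hc₁
    have hle : Vfin P μ β (j + n) c₁ - Vfin P μ β (j + n) c₂
        ≤ Jval P μ β j n σ c₁ - Jval P μ β j n σ c₂ := by
      have h2 := Jval_le_Vfin (j := j) hP hμ hI hβ.1.le n σ hc₂
      linarith [le_of_eq hσ]
    refine hle.trans ?_
    rw [Jval_expand hP hμ n σ hc₁, Jval_expand hP hμ n σ hc₂]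
    have hsplit : (∑ t ∈ Finset.range n, β ^ t * Aterm P μ t σ c₁)
        + β ^ n * Bterm P μ β j n σ c₁
        - ((∑ t ∈ Finset.range n, β ^ t * Aterm P μ t σ c₂)
          + β ^ n * Bterm P μ β j n σ c₂)
        = (∑ t ∈ Finset.range n, β ^ t * (Aterm P μ t σ c₁ - Aterm P μ t σ c₂))
          + β ^ n * (Bterm P μ β j n σ c₁ - Bterm P μ β j n σ c₂) := by
      rw [Finset.sum_congr rfl fun t (_ : t ∈ Finset.range n) =>
        mul_sub (β ^ t) (Aterm P μ t σ c₁) (Aterm P μ t σ c₂), Finset.sum_sub_distrib]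
      ring
    rw [hsplit]
    have hA : ∀ t ∈ Finset.range n, β ^ t * (Aterm P μ t σ c₁ - Aterm P μ t σ c₂)
        ≤ β ^ t * ((α ^ t + 1/2) * l1 c₁ c₂) := fun t _ =>
      mul_le_mul_of_nonneg_left (Aterm_diff hM hP hPl hε0 hεh hμ hα t σ hc₁ hc₂)
        (pow_nonneg hβ.1.le t)
    have hB : β ^ n * (Bterm P μ β j n σ c₁ - Bterm P μ β j n σ c₂)
        ≤ β ^ n * (Λ * (2 * α ^ n + (1 - M * ε)) * l1 c₁ c₂) :=
      mul_le_mul_of_nonneg_left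
        (Bterm_diff hM hP hPl hε0 hεh hμ hα hΛ0 hLip hn σ hc₁ hc₂)
        (pow_nonneg hβ.1.le n)
    calc (∑ t ∈ Finset.range n, β ^ t * (Aterm P μ t σ c₁ - Aterm P μ t σ c₂))
          + β ^ n * (Bterm P μ β j n σ c₁ - Bterm P μ β j n σ c₂)
        ≤ (∑ t ∈ Finset.range n, β ^ t * ((α ^ t + 1/2) * l1 c₁ c₂))
          + β ^ n * (Λ * (2 * α ^ n + (1 - M * ε)) * l1 c₁ c₂) := by
          exact add_le_add (Finset.sum_le_sum hA) hB
      _ = ((∑ t ∈ Finset.range n, β ^ t * (α ^ t + 1/2))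
            + β ^ n * (Λ * (2 * α ^ n + (1 - M * ε)))) * l1 c₁ c₂ := by
          rw [add_mul, Finset.sum_mul]
          congr 1
          · exact Finset.sum_congr rfl fun t _ => by ring
          · ring
  rw [abs_sub_le_iff]
  refine ⟨oneside hb₁ hb₂, ?_⟩
  rw [l1_symm] at *
  exact oneside hb₂ hb₁

end Block

set_option maxHeartbeats 2000000 in
/-- Lipschitz bound for the finite-horizon discounted value
functions at horizons that are multiples of `n₀`. -/
theorem discounted_value_lipschitz {M I : ℕ} (hM : 2 ≤ M) (hI : 0 < I)
    (P : Fin M → Fin M → ℝ) (hP : RowStochastic P)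
    (μ : Fin M → Fin I → ℝ) (hμ : ∀ m i, μ m i ∈ Set.Ioo (0 : ℝ) 1)
    (ε : ℝ) (hε : IsLeast (Set.range fun q : Fin M × Fin M => P q.1 q.2) ε)
    (hε0 : 0 < ε) (hεhalf : ε < 1 / 2)
    (α C₄ C₅ γ η : ℝ) (n₀ : ℕ)
    (hα : α = (1 - 2 * ε) / (1 - ε))
    (hC₄ : C₄ = 2 / (1 - α)) (hC₅ : C₅ = (1 + α) / 2)
    (hn₀ : n₀ = ⌈Real.log ((1 - C₅) / (2 * C₄)) / Real.log α⌉₊)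
    (hγ : γ = (3 + α) / 4)
    (hη : η = C₄ / (1 - α) + C₅ * n₀)
    (β : ℝ) (hβ : β ∈ Set.Ioo (0 : ℝ) 1)
    (k : ℕ) (hk : 1 ≤ k)
    (b₁ b₂ : Fin M → ℝ) (hb₁ : IsBelief b₁) (hb₂ : IsBelief b₂) :
    |Vfin P μ β (k * n₀) b₁ - Vfin P μ β (k * n₀) b₂| ≤
      (η * (1 - (β ^ n₀ * γ) ^ k) / (1 - β ^ n₀ * γ) + (β ^ n₀ * γ) ^ k) *
        l1 b₁ b₂ := by
  have hPl : ∀ m m', ε ≤ P m m' := fun m m' => hε.2 ⟨(m, m'), rfl⟩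
  have hε1 : (0:ℝ) < 1 - ε := by linarith
  have hα0 : 0 < α := by
    rw [hα]; apply div_pos <;> linarith
  have hα1 : α < 1 := by
    rw [hα, div_lt_one hε1]; linarith
  have h1α : (0:ℝ) < 1 - α := by linarith
  -- the ratio defining n₀
  have hylog : (1 - C₅) / (2 * C₄) = (1 - α)^2 / 8 := by
    rw [hC₅, hC₄]
    field_simp
    ring
  have hy0 : (0:ℝ) < (1 - α)^2 / 8 := by positivity
  have hy1 : (1 - α)^2 / 8 < 1 := by nlinarith
  have hlogα : Real.log α < 0 := Real.log_neg hα0 hα1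
  have hlogy : Real.log ((1 - α)^2 / 8) < 0 := Real.log_neg hy0 hy1
  have hn₀' : n₀ = ⌈Real.log ((1 - α)^2 / 8) / Real.log α⌉₊ := by rw [hn₀, hylog]
  have hn₀pos : n₀ ≠ 0 := by
    rw [hn₀']
    have hpos : 0 < Real.log ((1 - α)^2 / 8) / Real.log α :=
      div_pos_of_neg_of_neg hlogy hlogα
    have := Nat.ceil_pos.2 hpos
    omega
  have hpow : α ^ n₀ ≤ (1 - α)^2 / 8 := by
    have hceil : Real.log ((1 - α)^2 / 8) / Real.log α ≤ (n₀:ℝ) := by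
      rw [hn₀']; exact Nat.le_ceil _
    have hmul := mul_le_mul_of_nonpos_right hceil hlogα.le
    rw [div_mul_cancel₀ _ hlogα.ne] at hmul
    calc α ^ n₀ = Real.exp (Real.log (α ^ n₀)) :=
          (Real.exp_log (pow_pos hα0 n₀)).symm
      _ = Real.exp ((n₀:ℝ) * Real.log α) := by rw [Real.log_pow]
      _ ≤ Real.exp (Real.log ((1 - α)^2 / 8)) := Real.exp_le_exp.2 hmul
      _ = (1 - α)^2 / 8 := Real.exp_log hy0
  -- sum of reward coefficients is at most η
  have hgeom : ∑ t ∈ Finset.range n₀, α ^ t ≤ 1 / (1 - α) := by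
    rw [geom_sum_eq hα1.ne n₀,
      show (α ^ n₀ - 1)/(α - 1) = (1 - α ^ n₀)/(1 - α) from by
        rw [← neg_div_neg_eq]; ring_nf]
    rw [div_le_div_iff₀ h1α h1α]
    have : 0 ≤ α ^ n₀ := pow_nonneg hα0.le n₀
    nlinarith
  have hsum : (∑ t ∈ Finset.range n₀, β ^ t * (α ^ t + 1/2)) ≤ η := by
    have hterm : ∀ t ∈ Finset.range n₀, β ^ t * (α ^ t + 1/2) ≤ α ^ t + 1/2 := by
      intro t _
      have hβt : β ^ t ≤ 1 := pow_le_one₀ hβ.1.le hβ.2.le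
      have : (0:ℝ) ≤ α ^ t + 1/2 := by positivity
      nlinarith
    refine (Finset.sum_le_sum hterm).trans ?_
    rw [Finset.sum_add_distrib, Finset.sum_const, Finset.card_range, nsmul_eq_mul]
    have h2 : (1:ℝ) / (1 - α) ≤ C₄ / (1 - α) := by
      rw [hC₄, div_div]
      rw [div_le_div_iff₀ h1α (mul_pos h1α h1α)]
      nlinarith [mul_nonneg h1α.le (by linarith : (0:ℝ) ≤ 1 + α)]
    have h3 : (n₀:ℝ) * (1/2) ≤ C₅ * n₀ := by
      rw [hC₅]
      have hn0 : (0:ℝ) ≤ (n₀:ℝ) := Nat.cast_nonneg n₀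
      nlinarith
    rw [hη]
    linarith [hgeom]
  -- terminal coefficient is at most γ
  have hMε : 1 - (M:ℝ) * ε ≤ 1 - 2 * ε := by
    have : (2:ℝ) ≤ (M:ℝ) := by exact_mod_cast hM
    nlinarith
  have hterm : 2 * α ^ n₀ + (1 - (M:ℝ) * ε) ≤ γ := by
    have h12 : 1 - 2*ε = α * (1 - ε) := by
      rw [hα]; field_simp
    have hαε : α * (1 - ε) ≤ α := by nlinarith
    have h2 : 2 * α ^ n₀ ≤ (1 - α) / 4 := by nlinarith
    rw [hγ]; linarith [hMε]
  -- the discount-contraction factor q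
  have hγ0 : 0 ≤ γ := by rw [hγ]; linarith
  have hγ1 : γ < 1 := by rw [hγ]; linarith
  have hq0 : 0 ≤ β ^ n₀ * γ := mul_nonneg (pow_nonneg hβ.1.le n₀) hγ0
  have hq1 : β ^ n₀ * γ < 1 := by
    calc β ^ n₀ * γ ≤ 1 * γ :=
          mul_le_mul_of_nonneg_right (pow_le_one₀ hβ.1.le hβ.2.le) hγ0
      _ = γ := one_mul γ
      _ < 1 := hγ1
  have h1q : (0:ℝ) < 1 - β ^ n₀ * γ := by linarith
  have hη0 : 0 ≤ η := by
    rw [hη, hC₄, hC₅]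
    have : (0:ℝ) ≤ 2 / (1-α) / (1-α) := by positivity
    have : (0:ℝ) ≤ (1+α)/2 * n₀ := by positivity
    positivity
  -- main induction on the number of blocks
  have main : ∀ (k : ℕ) {c₁ c₂ : Fin M → ℝ}, IsBelief c₁ → IsBelief c₂ →
      |Vfin P μ β (k * n₀) c₁ - Vfin P μ β (k * n₀) c₂| ≤
        (η * (1 - (β ^ n₀ * γ) ^ k) / (1 - β ^ n₀ * γ) + (β ^ n₀ * γ) ^ k) *
          l1 c₁ c₂ := by
    intro k
    induction k with
    | zero =>
        intro c₁ c₂ hc₁ hc₂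
        rw [show 0 * n₀ = 0 from by ring]
        rw [show Vfin P μ β 0 c₁ = 0 from rfl, show Vfin P μ β 0 c₂ = 0 from rfl]
        simp only [sub_zero, abs_zero, pow_zero, sub_self, mul_zero, zero_div, zero_add,
          one_mul]
        exact l1_nonneg c₁ c₂
    | succ k ih =>
        intro c₁ c₂ hc₁ hc₂
        set q : ℝ := β ^ n₀ * γ with hqdef
        have hK0 : 0 ≤ η * (1 - q ^ k) / (1 - q) + q ^ k := by
          have hqk1 : q ^ k ≤ 1 := pow_le_one₀ hq0 hq1.le
          have : 0 ≤ η * (1 - q ^ k) / (1 - q) := by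
            apply div_nonneg _ h1q.le
            exact mul_nonneg hη0 (by linarith)
          positivity
        have hblock := block_lemma hM hI hP hPl hε0 hεhalf hμ hα hβ
          (Λ := η * (1 - q ^ k) / (1 - q) + q ^ k) hK0
          (fun {d₁ d₂} hd₁ hd₂ => ih hd₁ hd₂) hn₀pos hc₁ hc₂
        rw [show (k+1) * n₀ = k * n₀ + n₀ from by ring]
        refine hblock.trans ?_
        refine mul_le_mul_of_nonneg_right ?_ (l1_nonneg c₁ c₂)
        have hcoef : β ^ n₀ * ((η * (1 - q ^ k) / (1 - q) + q ^ k)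
            * (2 * α ^ n₀ + (1 - (M:ℝ) * ε)))
            ≤ q * (η * (1 - q ^ k) / (1 - q) + q ^ k) := by
          rw [hqdef]
          have h1 : (η * (1 - q ^ k) / (1 - q) + q ^ k) * (2 * α ^ n₀ + (1 - (M:ℝ) * ε))
              ≤ (η * (1 - q ^ k) / (1 - q) + q ^ k) * γ :=
            mul_le_mul_of_nonneg_left hterm hK0
          calc β ^ n₀ * ((η * (1 - q ^ k) / (1 - q) + q ^ k) * (2 * α ^ n₀ + (1 - (M:ℝ) * ε)))
              ≤ β ^ n₀ * ((η * (1 - q ^ k) / (1 - q) + q ^ k) * γ) :=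
                mul_le_mul_of_nonneg_left h1 (pow_nonneg hβ.1.le n₀)
            _ = β ^ n₀ * γ * (η * (1 - q ^ k) / (1 - q) + q ^ k) := by ring
        have hrec : η + q * (η * (1 - q ^ k) / (1 - q) + q ^ k)
            = η * (1 - q ^ (k+1)) / (1 - q) + q ^ (k+1) := by
          field_simp
          ring
        calc (∑ t ∈ Finset.range n₀, β ^ t * (α ^ t + 1/2))
              + β ^ n₀ * ((η * (1 - q ^ k) / (1 - q) + q ^ k)
                * (2 * α ^ n₀ + (1 - (M:ℝ) * ε)))
            ≤ η + q * (η * (1 - q ^ k) / (1 - q) + q ^ k) := add_le_add hsum hcoef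
          _ = η * (1 - q ^ (k+1)) / (1 - q) + q ^ (k+1) := hrec
  exact main k hb₁ hb₂
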